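/- Let A, B be positive definite matrices, p ∈ [0,1], q ∈ (0,1). Then max{p/q,(1−p)/(1−q)}·(A ∇_q B − A #_q B) ≥ A ∇_p B − A #_p B ≥ min{p/q,(1−p)/(1−q)}·(A ∇_q B − A #_q B), in the Loewner order. -/

import Mathlib

open Matrix ComplexOrder

/-- Real power of a Hermitian matrix via the spectral theorem (functional calculus);
junk value `0` for non-Hermitian matrices. -/
noncomputable def Matrix.hrpow {n : ℕ} (A : Matrix (Fin n) (Fin n) ℂ) (r : ℝ) :
    Matrix (Fin n) (Fin n) ℂ :=
  if h : A.IsHermitian then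
    (h.eigenvectorUnitary : Matrix (Fin n) (Fin n) ℂ) *
      Matrix.diagonal (fun i => ((h.eigenvalues i ^ r : ℝ) : ℂ)) *
      (h.eigenvectorUnitary : Matrix (Fin n) (Fin n) ℂ)ᴴ
  else 0

/-- Weighted geometric mean `A #_ν B` of positive definite matrices:
`A^{1/2} (A^{-1/2} B A^{-1/2})^ν A^{1/2}`. -/
noncomputable def Matrix.gmean {n : ℕ} (A B : Matrix (Fin n) (Fin n) ℂ) (ν : ℝ) :
    Matrix (Fin n) (Fin n) ℂ :=
  A.hrpow (1/2) * ((A.hrpow (-(1/2)) * B * A.hrpow (-(1/2))).hrpow ν) * A.hrpow (1/2)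

/-- Quadratic weighted geometric mean `X ⓢ_ν Y = X* (|Y X⁻¹|²)^ν X`. -/
noncomputable def Matrix.qgmean {n : ℕ} (X Y : Matrix (Fin n) (Fin n) ℂ) (ν : ℝ) :
    Matrix (Fin n) (Fin n) ℂ :=
  Xᴴ * ((Y * X⁻¹)ᴴ * (Y * X⁻¹)).hrpow ν * X

/-! ### Scalar auxiliary lemmas -/

/-- scalar function `(1-p) + p x - x^p`. -/
noncomputable def sfaux (x p : ℝ) : ℝ := (1 - p) + p * x - x ^ p

lemma rpow_convex_combo {x : ℝ} (hx : 0 < x) {a b p₁ p₂ : ℝ}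
    (ha : 0 ≤ a) (hb : 0 ≤ b) (hab : a + b = 1) :
    x ^ (a * p₁ + b * p₂) ≤ a * x ^ p₁ + b * x ^ p₂ := by
  have h := convexOn_exp.2 (Set.mem_univ (Real.log x * p₁)) (Set.mem_univ (Real.log x * p₂))
    ha hb hab
  simp only [smul_eq_mul] at h
  rw [Real.rpow_def_of_pos hx, Real.rpow_def_of_pos hx, Real.rpow_def_of_pos hx]
  calc Real.exp (Real.log x * (a * p₁ + b * p₂))
      = Real.exp (a * (Real.log x * p₁) + b * (Real.log x * p₂)) := by ring_nf
    _ ≤ a * Real.exp (Real.log x * p₁) + b * Real.exp (Real.log x * p₂) := h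

lemma sfaux_combo {x : ℝ} (hx : 0 < x) {a b p₁ p₂ : ℝ}
    (ha : 0 ≤ a) (hb : 0 ≤ b) (hab : a + b = 1) :
    a * sfaux x p₁ + b * sfaux x p₂ ≤ sfaux x (a * p₁ + b * p₂) := by
  have h := rpow_convex_combo hx ha hb hab (p₁ := p₁) (p₂ := p₂)
  have hb' : b = 1 - a := by linarith
  subst hb'
  simp only [sfaux]
  nlinarith [h]

lemma sfaux_zero (x : ℝ) : sfaux x 0 = 0 := by simp [sfaux]

lemma sfaux_one (x : ℝ) : sfaux x 1 = 0 := by simp [sfaux]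

lemma scalar_main {x p q : ℝ} (hx : 0 < x) (hp0 : 0 ≤ p) (hp1 : p ≤ 1)
    (hq0 : 0 < q) (hq1 : q < 1) :
    min (p / q) ((1 - p) / (1 - q)) * sfaux x q ≤ sfaux x p ∧
      sfaux x p ≤ max (p / q) ((1 - p) / (1 - q)) * sfaux x q := by
  have h1q : (0:ℝ) < 1 - q := by linarith
  rcases le_total p q with h | h
  · have hp1' : p < 1 := lt_of_le_of_lt h hq1
    have h1p : (0:ℝ) < 1 - p := by linarith
    have hcmp : p / q ≤ (1 - p) / (1 - q) := by
      rw [div_le_div_iff₀ hq0 h1q]; nlinarith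
    have hmin : min (p / q) ((1 - p) / (1 - q)) = p / q := min_eq_left hcmp
    have hmax : max (p / q) ((1 - p) / (1 - q)) = (1 - p) / (1 - q) := max_eq_right hcmp
    constructor
    · have ha : 0 ≤ p / q := by positivity
      have hb : 0 ≤ 1 - p / q := by
        have : p / q ≤ 1 := by rw [div_le_one hq0]; exact h
        linarith
      have hcomb := sfaux_combo hx ha hb (by ring) (p₁ := q) (p₂ := 0)
      have harg : p / q * q + (1 - p / q) * 0 = p := by field_simp; ring
      rw [harg, sfaux_zero, mul_zero, add_zero] at hcomb
      rw [hmin]; exact hcomb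
    · have ha : 0 ≤ (1 - q) / (1 - p) := by positivity
      have hb : 0 ≤ 1 - (1 - q) / (1 - p) := by
        have : (1 - q) / (1 - p) ≤ 1 := by rw [div_le_one h1p]; linarith
        linarith
      have hcomb := sfaux_combo hx ha hb (by ring) (p₁ := p) (p₂ := 1)
      have harg : (1 - q) / (1 - p) * p + (1 - (1 - q) / (1 - p)) * 1 = q := by
        field_simp; ring
      rw [harg, sfaux_one, mul_zero, add_zero] at hcomb
      rw [hmax]
      have h2 : sfaux x p = (1 - p) / (1 - q) * ((1 - q) / (1 - p) * sfaux x p) := by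
        field_simp
      rw [h2]
      exact mul_le_mul_of_nonneg_left hcomb (by positivity)
  · have hp0' : 0 < p := lt_of_lt_of_le hq0 h
    have h1p : (0:ℝ) ≤ 1 - p := by linarith
    have hcmp : (1 - p) / (1 - q) ≤ p / q := by
      rw [div_le_div_iff₀ h1q hq0]; nlinarith
    have hmin : min (p / q) ((1 - p) / (1 - q)) = (1 - p) / (1 - q) := min_eq_right hcmp
    have hmax : max (p / q) ((1 - p) / (1 - q)) = p / q := max_eq_left hcmp
    constructor
    · have ha : 0 ≤ (1 - p) / (1 - q) := by positivity
      have hb : 0 ≤ 1 - (1 - p) / (1 - q) := by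
        have : (1 - p) / (1 - q) ≤ 1 := by rw [div_le_one h1q]; linarith
        linarith
      have hcomb := sfaux_combo hx ha hb (by ring) (p₁ := q) (p₂ := 1)
      have harg : (1 - p) / (1 - q) * q + (1 - (1 - p) / (1 - q)) * 1 = p := by
        field_simp; ring
      rw [harg, sfaux_one, mul_zero, add_zero] at hcomb
      rw [hmin]; exact hcomb
    · have ha : 0 ≤ q / p := by positivity
      have hb : 0 ≤ 1 - q / p := by
        have : q / p ≤ 1 := by rw [div_le_one hp0']; exact h
        linarith
      have hcomb := sfaux_combo hx ha hb (by ring) (p₁ := p) (p₂ := 0)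
      have harg : q / p * p + (1 - q / p) * 0 = q := by field_simp; ring
      rw [harg, sfaux_zero, mul_zero, add_zero] at hcomb
      rw [hmax]
      have h2 : sfaux x p = p / q * (q / p * sfaux x p) := by field_simp
      rw [h2]
      exact mul_le_mul_of_nonneg_left hcomb (by positivity)

/-! ### Matrix auxiliary lemmas -/

namespace SpecAux

variable {n : ℕ} {A : Matrix (Fin n) (Fin n) ℂ}

/-- apply a real function to a Hermitian matrix via its spectral decomposition -/
noncomputable def dm (hA : A.IsHermitian) (f : ℝ → ℝ) : Matrix (Fin n) (Fin n) ℂ :=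
  (hA.eigenvectorUnitary : Matrix (Fin n) (Fin n) ℂ) *
    Matrix.diagonal (fun i => ((f (hA.eigenvalues i) : ℝ) : ℂ)) *
    (hA.eigenvectorUnitary : Matrix (Fin n) (Fin n) ℂ)ᴴ

lemma hrpow_eq_dm (hA : A.IsHermitian) (r : ℝ) : A.hrpow r = dm hA (fun x => x ^ r) := by
  rw [Matrix.hrpow, dif_pos hA]; rfl

lemma uu' (hA : A.IsHermitian) :
    (hA.eigenvectorUnitary : Matrix (Fin n) (Fin n) ℂ) *
      (hA.eigenvectorUnitary : Matrix (Fin n) (Fin n) ℂ)ᴴ = 1 := by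
  rw [← star_eq_conjTranspose]
  exact Matrix.mem_unitaryGroup_iff.mp hA.eigenvectorUnitary.2

lemma u'u (hA : A.IsHermitian) :
    (hA.eigenvectorUnitary : Matrix (Fin n) (Fin n) ℂ)ᴴ *
      (hA.eigenvectorUnitary : Matrix (Fin n) (Fin n) ℂ) = 1 := by
  rw [← star_eq_conjTranspose]
  exact Matrix.mem_unitaryGroup_iff'.mp hA.eigenvectorUnitary.2

lemma dm_mul (hA : A.IsHermitian) (f g : ℝ → ℝ) :
    dm hA f * dm hA g = dm hA (fun x => f x * g x) := by
  unfold dm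
  simp only [mul_assoc]
  rw [← mul_assoc ((hA.eigenvectorUnitary : Matrix (Fin n) (Fin n) ℂ)ᴴ), u'u hA, one_mul,
    ← mul_assoc (Matrix.diagonal _), Matrix.diagonal_mul_diagonal]
  congr 2
  ext i
  push_cast
  ring

lemma dm_one (hA : A.IsHermitian) : dm hA (fun _ => 1) = 1 := by
  unfold dm
  simp only [Complex.ofReal_one, Matrix.diagonal_one, mul_one, uu' hA]

lemma dm_id (hA : A.IsHermitian) : dm hA (fun x => x) = A := by
  conv_rhs => rw [hA.spectral_theorem]
  rw [dm, Unitary.conjStarAlgAut_apply, star_eq_conjTranspose]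
  rfl

lemma dm_add (hA : A.IsHermitian) (f g : ℝ → ℝ) :
    dm hA f + dm hA g = dm hA (fun x => f x + g x) := by
  unfold dm
  rw [← Matrix.add_mul, ← Matrix.mul_add, Matrix.diagonal_add]
  congr 2
  funext i
  push_cast
  simp

lemma dm_sub (hA : A.IsHermitian) (f g : ℝ → ℝ) :
    dm hA f - dm hA g = dm hA (fun x => f x - g x) := by
  unfold dm
  rw [← Matrix.sub_mul, ← Matrix.mul_sub, Matrix.diagonal_sub]
  congr 2
  funext i
  push_cast
  simp

lemma dm_smul (hA : A.IsHermitian) (f : ℝ → ℝ) (r : ℝ) :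
    ((r : ℂ)) • dm hA f = dm hA (fun x => r * f x) := by
  unfold dm
  rw [← Matrix.smul_mul, ← Matrix.mul_smul]
  congr 2
  ext i j
  by_cases h : i = j <;> simp [Matrix.diagonal_apply, h, smul_eq_mul]

lemma dm_congr (hA : A.IsHermitian) {f g : ℝ → ℝ}
    (h : ∀ i, f (hA.eigenvalues i) = g (hA.eigenvalues i)) : dm hA f = dm hA g := by
  have hfg : (fun i => ((f (hA.eigenvalues i) : ℝ) : ℂ)) =
      fun i => ((g (hA.eigenvalues i) : ℝ) : ℂ) := funext fun i => by rw [h i]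
  rw [dm, dm, hfg]

lemma dm_posSemidef (hA : A.IsHermitian) {f : ℝ → ℝ}
    (h : ∀ i, 0 ≤ f (hA.eigenvalues i)) : (dm hA f).PosSemidef := by
  exact (Matrix.posSemidef_diagonal_iff.mpr fun i =>
    Complex.zero_le_real.mpr (h i)).mul_mul_conjTranspose_same _

lemma dm_isHermitian (hA : A.IsHermitian) (f : ℝ → ℝ) : (dm hA f).IsHermitian := by
  apply Matrix.isHermitian_mul_mul_conjTranspose
  rw [Matrix.IsHermitian, Matrix.diagonal_conjTranspose]
  congr 1
  funext i
  simp [Pi.star_def]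

lemma posdef_conj {B T : Matrix (Fin n) (Fin n) ℂ} (hB : B.PosDef)
    (hTh : T.IsHermitian) (hTu : IsUnit T) : (T * B * T).PosDef := by
  have h1 : T * B * T = Tᴴ * B * T := by rw [hTh.eq]
  rw [h1]
  refine posDef_iff_dotProduct_mulVec.mpr ⟨Matrix.isHermitian_conjTranspose_mul_mul T hB.1, fun x hx => ?_⟩
  have hinj := Matrix.mulVec_injective_iff_isUnit.mpr hTu
  have hxz : T *ᵥ x ≠ 0 := by
    intro h0
    exact hx (hinj (by simpa using h0))
  have h2 := (posDef_iff_dotProduct_mulVec.mp hB).2 hxz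
  simpa only [star_mulVec, dotProduct_mulVec, vecMul_vecMul, Matrix.mulVec_mulVec, Matrix.mul_assoc] using h2

end SpecAux

open SpecAux

theorem stmt_17 {n : ℕ} (A B : Matrix (Fin n) (Fin n) ℂ)
    (hA : A.PosDef) (hB : B.PosDef)
    {p q : ℝ} (hp : p ∈ Set.Icc (0:ℝ) 1) (hq : q ∈ Set.Ioo (0:ℝ) 1) :
    ((max (p / q) ((1 - p) / (1 - q)) : ℝ) •
        ((((1 - q : ℝ) : ℂ) • A + ((q : ℝ) : ℂ) • B) - A.gmean B q) -
      ((((1 - p : ℝ) : ℂ) • A + ((p : ℝ) : ℂ) • B) - A.gmean B p)).PosSemidef ∧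
    (((((1 - p : ℝ) : ℂ) • A + ((p : ℝ) : ℂ) • B) - A.gmean B p) -
      (min (p / q) ((1 - p) / (1 - q)) : ℝ) •
        ((((1 - q : ℝ) : ℂ) • A + ((q : ℝ) : ℂ) • B) - A.gmean B q)).PosSemidef := by
  obtain ⟨hp0, hp1⟩ := hp
  obtain ⟨hq0, hq1⟩ := hq
  have hA1 : A.IsHermitian := hA.1
  set S : Matrix (Fin n) (Fin n) ℂ := A.hrpow (1/2) with hSdef
  set T : Matrix (Fin n) (Fin n) ℂ := A.hrpow (-(1/2)) with hTdef
  have hSS : S * S = A := by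
    rw [hSdef, hrpow_eq_dm hA1, dm_mul]
    refine (dm_congr hA1 (g := fun x => x) fun i => ?_).trans (dm_id hA1)
    have hx := hA.eigenvalues_pos i
    rw [← Real.rpow_add hx]
    norm_num
  have hST : S * T = 1 := by
    rw [hSdef, hTdef, hrpow_eq_dm hA1, hrpow_eq_dm hA1, dm_mul]
    refine (dm_congr hA1 (g := fun _ => 1) fun i => ?_).trans (dm_one hA1)
    have hx := hA.eigenvalues_pos i
    rw [← Real.rpow_add hx]
    norm_num
  have hTS : T * S = 1 := by
    rw [hSdef, hTdef, hrpow_eq_dm hA1, hrpow_eq_dm hA1, dm_mul]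
    refine (dm_congr hA1 (g := fun _ => 1) fun i => ?_).trans (dm_one hA1)
    have hx := hA.eigenvalues_pos i
    rw [← Real.rpow_add hx]
    norm_num
  have hSh : S.IsHermitian := by rw [hSdef, hrpow_eq_dm hA1]; exact dm_isHermitian _ _
  have hTh : T.IsHermitian := by rw [hTdef, hrpow_eq_dm hA1]; exact dm_isHermitian _ _
  set C : Matrix (Fin n) (Fin n) ℂ := T * B * T with hCdef
  have hCpd : C.PosDef := posdef_conj hB hTh ⟨⟨T, S, hTS, hST⟩, rfl⟩
  have hC1 : C.IsHermitian := hCpd.1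
  have hSCS : S * C * S = B := by
    rw [hCdef, show S * (T * B * T) * S = S * T * (B * (T * S)) by
      simp only [Matrix.mul_assoc], hST, hTS, one_mul, mul_one]
  -- main reduction
  have claim : ∀ r : ℝ, S * dm hC1 (fun x => (1 - r) * 1 + r * x - x ^ r) * S
      = ((((1 - r : ℝ) : ℂ) • A + ((r : ℝ) : ℂ) • B) - A.gmean B r) := by
    intro r
    have e1 : ((1 - r : ℝ) : ℂ) • (1 : Matrix (Fin n) (Fin n) ℂ)
        = dm hC1 (fun x => (1 - r) * 1) := by
      have h := dm_smul hC1 (fun _ => 1) (1 - r)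
      rw [dm_one hC1] at h
      rw [← h]
    have e2 : ((r : ℝ) : ℂ) • C = dm hC1 (fun x => r * x) := by
      have h := dm_smul hC1 (fun x => x) r
      rw [dm_id hC1] at h
      rw [← h]
    have hexp : dm hC1 (fun x => (1 - r) * 1 + r * x - x ^ r)
        = (((1 - r : ℝ) : ℂ) • (1 : Matrix (Fin n) (Fin n) ℂ) + ((r : ℝ) : ℂ) • C)
            - C.hrpow r := by
      rw [e1, e2, hrpow_eq_dm hC1, dm_add, dm_sub]
    have hgm : A.gmean B r = S * C.hrpow r * S := rfl
    rw [hexp, hgm]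
    simp only [Matrix.mul_sub, Matrix.sub_mul, Matrix.mul_add, Matrix.add_mul,
      Matrix.mul_smul, Matrix.smul_mul, Matrix.mul_one, Matrix.mul_assoc]
    rw [show S * S = A from hSS]
    rw [show S * (C * S) = B by rw [← Matrix.mul_assoc]; exact hSCS]
  have hreal : ∀ (r : ℝ) (M : Matrix (Fin n) (Fin n) ℂ), r • M = ((r : ℂ)) • M := by
    intro r M
    ext i j
    simp [Matrix.smul_apply, Complex.real_smul]
  constructor
  · rw [hreal, ← claim p, ← claim q]
    have hfactor : ((max (p / q) ((1 - p) / (1 - q)) : ℝ) : ℂ) •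
          (S * dm hC1 (fun x => (1 - q) * 1 + q * x - x ^ q) * S)
            - S * dm hC1 (fun x => (1 - p) * 1 + p * x - x ^ p) * S
        = Sᴴ * (((max (p / q) ((1 - p) / (1 - q)) : ℝ) : ℂ) •
              dm hC1 (fun x => (1 - q) * 1 + q * x - x ^ q)
            - dm hC1 (fun x => (1 - p) * 1 + p * x - x ^ p)) * S := by
      rw [hSh.eq]
      simp only [Matrix.mul_sub, Matrix.sub_mul, Matrix.mul_smul, Matrix.smul_mul]
    rw [hfactor, dm_smul, dm_sub]
    refine (dm_posSemidef hC1 fun i => ?_).conjTranspose_mul_mul_same S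
    have hx := hCpd.eigenvalues_pos i
    have hkey := (scalar_main hx hp0 hp1 hq0 hq1).2
    simp only [sfaux] at hkey
    set x := hC1.eigenvalues i
    simp only [mul_one]
    linarith
  · rw [hreal, ← claim p, ← claim q]
    have hfactor : S * dm hC1 (fun x => (1 - p) * 1 + p * x - x ^ p) * S
          - ((min (p / q) ((1 - p) / (1 - q)) : ℝ) : ℂ) •
            (S * dm hC1 (fun x => (1 - q) * 1 + q * x - x ^ q) * S)
        = Sᴴ * (dm hC1 (fun x => (1 - p) * 1 + p * x - x ^ p)
            - ((min (p / q) ((1 - p) / (1 - q)) : ℝ) : ℂ) •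
              dm hC1 (fun x => (1 - q) * 1 + q * x - x ^ q)) * S := by
      rw [hSh.eq]
      simp only [Matrix.mul_sub, Matrix.sub_mul, Matrix.mul_smul, Matrix.smul_mul]
    rw [hfactor, dm_smul, dm_sub]
    refine (dm_posSemidef hC1 fun i => ?_).conjTranspose_mul_mul_same S
    have hx := hCpd.eigenvalues_pos i
    have hkey := (scalar_main hx hp0 hp1 hq0 hq1).1
    simp only [sfaux] at hkey
    set x := hC1.eigenvalues i
    simp only [mul_one]
    linarith
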